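/- arXiv:2506.00031 — 5 statements merged into one kernel-verified Lean document; each statement's English description precedes it below -/
import Mathlib

section
/- For every integer k ≥ 2, the line with k origins L_k^♯ is not a contractible space. -/
/-- The gluing relation on `Fin k × ℝ`: `(i,x) ∼ (j,y)` iff `x = y` and
(`x ≠ 0` or `i = j`), i.e. all non-zero points are glued and the origins stay apart. -/
def lineSetoid (k : ℕ) : Setoid (Fin k × ℝ) where
  r p q := p.2 = q.2 ∧ (p.2 ≠ 0 ∨ p.1 = q.1)
  iseqv := by
    constructor
    · exact fun p => ⟨rfl, Or.inr rfl⟩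
    · rintro p q ⟨h1, h2⟩
      refine ⟨h1.symm, ?_⟩
      rcases h2 with h | h
      · exact Or.inl (h1 ▸ h)
      · exact Or.inr h.symm
    · rintro p q r ⟨h1, h2⟩ ⟨h3, h4⟩
      refine ⟨h1.trans h3, ?_⟩
      rcases h2 with h | h
      · exact Or.inl h
      · rcases h4 with h' | h'
        · exact Or.inl (h1.symm ▸ h')
        · exact Or.inr (h.trans h')

/-- The line with `k` (inseparable) origins `L_k^♯`, as a quotient of `Fin k × ℝ`
equipped with the quotient topology. -/
def LineK (k : ℕ) : Type := Quotient (lineSetoid k)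

instance (k : ℕ) : TopologicalSpace (LineK k) :=
  inferInstanceAs (TopologicalSpace (Quotient (lineSetoid k)))

/-- `[x]_i`, the class of the point `x` on the `i`-th copy of `ℝ`. -/
def LineK.mk (k : ℕ) (i : Fin k) (x : ℝ) : LineK k := Quotient.mk (lineSetoid k) (i, x)

/-- The `i`-th origin `o_i = [0]_i`. -/
def LineK.origin (k : ℕ) (i : Fin k) : LineK k := LineK.mk k i 0

/-- The canonical projection `p : L_k^♯ → ℝ`, `[x]_i ↦ x`. -/
def LineK.proj (k : ℕ) : LineK k → ℝ :=
  Quotient.lift (fun p => p.2) (fun _ _ h => h.1)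


open unitInterval Set Metric

namespace LineKProof

/-- Telescoping sum in `ZMod 2`. -/
lemma tele (N : ℕ) (f : ℕ → ZMod 2) :
    ∑ j ∈ Finset.range N, (f j + f (j + 1)) = f 0 + f N := by
  have h : ∀ j, f j + f (j + 1) = f (j + 1) - f j := by
    intro j
    have : ∀ x y : ZMod 2, x + y = y - x := by decide
    exact this _ _
  simp_rw [h]
  rw [Finset.sum_range_sub f N]
  have : ∀ x y : ZMod 2, x - y = x + y := by decide
  rw [this, add_comm]

/-- The crossing indicator. -/
noncomputable def chi (g u : I × I → ℝ) (c : ℝ) (p q : I × I) : ZMod 2 :=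
  if (g p - c) * (g q - c) < 0 ∧ 0 < u p then 1 else 0

set_option maxHeartbeats 2000000 in
/-- **The discrete winding-parity core lemma.** There is no pair of continuous
functions `g u` on the square with the stated boundary behaviour and no common zero. -/
theorem no_winding (g u : I × I → ℝ) (hg : Continuous g) (hu : Continuous u)
    (h0 : ∀ q, g q = 0 → u q ≠ 0)
    (hbot : ∀ s : I, g (s, 0) = -1) (htop : ∀ s : I, g (s, 1) = 1)
    (hleft : ∀ t : I, g (0, t) = 2 * t - 1) (hright : ∀ t : I, g (1, t) = 2 * t - 1)
    (hlu : ∀ t : I, g (0, t) = 0 → 0 < u (0, t))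
    (hru : ∀ t : I, g (1, t) = 0 → u (1, t) < 0) : False := by
  classical
  -- the minimum of g² + u²
  obtain ⟨q0, -, hmin⟩ := isCompact_univ.exists_isMinOn univ_nonempty
    (((hg.mul hg).add (hu.mul hu)).continuousOn)
  have hM : 0 < g q0 * g q0 + u q0 * u q0 := by
    rcases eq_or_ne (g q0) 0 with h | h
    · have h' := mul_self_pos.2 (h0 q0 h); rw [h]; nlinarith
    · nlinarith [mul_self_nonneg (u q0), mul_self_pos.2 h]
  set m : ℝ := Real.sqrt (g q0 * g q0 + u q0 * u q0) with hm_def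
  have hm : 0 < m := Real.sqrt_pos.2 hM
  have hm2 : ∀ q, m ^ 2 ≤ g q ^ 2 + u q ^ 2 := by
    intro q
    have h1 : m ^ 2 = g q0 * g q0 + u q0 * u q0 := Real.sq_sqrt hM.le
    have h2 : g q0 * g q0 + u q0 * u q0 ≤ g q * g q + u q * u q := hmin (mem_univ q)
    rw [h1]
    exact h2.trans_eq (by ring)
  -- special points
  set half : I := ⟨1/2, by norm_num, by norm_num⟩ with hhalf_def
  have hhalfco : (half : ℝ) = 1/2 := rfl
  set w0 : I × I := (0, half) with hw0_def
  set w1 : I × I := (1, half) with hw1_def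
  have hgw0 : g w0 = 0 := by rw [hw0_def, hleft half, hhalfco]; norm_num
  have hgw1 : g w1 = 0 := by rw [hw1_def, hright half, hhalfco]; norm_num
  have huw0 : 0 < u w0 := hlu half hgw0
  have huw1 : u w1 < 0 := hru half hgw1
  -- neighbourhoods where u has a sign
  obtain ⟨ρ₀, hρ₀, hball₀⟩ := Metric.isOpen_iff.mp (isOpen_lt continuous_const hu) w0 huw0
  obtain ⟨ρ₁, hρ₁, hball₁⟩ := Metric.isOpen_iff.mp (isOpen_lt hu continuous_const) w1 huw1
  -- the scale ε
  set ε : ℝ := min (m / 4) (min ρ₀ ρ₁) with hε_def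
  have hε : 0 < ε := lt_min (by positivity) (lt_min hρ₀ hρ₁)
  have hεm : ε ≤ m / 4 := min_le_left _ _
  have hερ₀ : ε ≤ ρ₀ := le_trans (min_le_right _ _) (min_le_left _ _)
  have hερ₁ : ε ≤ ρ₁ := le_trans (min_le_right _ _) (min_le_right _ _)
  -- uniform continuity modulus
  obtain ⟨δ₁, hδ₁, hδ₁'⟩ := Metric.uniformContinuous_iff.mp
    (CompactSpace.uniformContinuous_of_continuous hg) ε hε
  obtain ⟨δ₂, hδ₂, hδ₂'⟩ := Metric.uniformContinuous_iff.mp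
    (CompactSpace.uniformContinuous_of_continuous hu) ε hε
  set ω : ℝ := min δ₁ δ₂ with hω_def
  have hω : 0 < ω := lt_min hδ₁ hδ₂
  -- grid size
  obtain ⟨n, hn⟩ := exists_nat_one_div_lt hω
  set N : ℕ := n + 1 with hN_def
  have hNR : (0 : ℝ) < N := by positivity
  have hNω : (1 : ℝ) / N < ω := by exact_mod_cast hn
  -- grid vertices
  set vtx : ℕ → I := fun i => projIcc 0 1 zero_le_one ((i : ℝ) / N) with hvtx_def
  set P : ℕ → ℕ → I × I := fun i j => (vtx i, vtx j) with hP_def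
  have hv0 : vtx 0 = 0 := by simp [hvtx_def]
  have hvN : vtx N = 1 := by
    simp only [hvtx_def]
    rw [div_self hNR.ne']
    simp [projIcc]
  have hvdist : ∀ i i' : ℕ, |(i : ℝ) - i'| ≤ 1 → dist (vtx i) (vtx i') < ω := by
    intro i i' h
    have := (LipschitzWith.projIcc (zero_le_one (α := ℝ))).dist_le_mul ((i : ℝ)/N) ((i' : ℝ)/N)
    calc dist (vtx i) (vtx i') ≤ 1 * dist ((i : ℝ)/N) ((i' : ℝ)/N) := this
      _ = |(i : ℝ) - i'| / N := by
          rw [one_mul, Real.dist_eq, ← sub_div, abs_div, abs_of_pos hNR]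
      _ ≤ 1 / N := by gcongr
      _ < ω := hNω
  -- closeness for grid neighbours
  have hclose : ∀ i j i' j' : ℕ, |(i:ℝ) - i'| ≤ 1 → |(j:ℝ) - j'| ≤ 1 →
      |g (P i j) - g (P i' j')| < ε ∧ |u (P i j) - u (P i' j')| < ε := by
    intro i j i' j' hi hj
    have hd : dist (P i j) (P i' j') < ω := by
      simp only [hP_def]
      rw [Prod.dist_eq]
      exact max_lt (hvdist _ _ hi) (hvdist _ _ hj)
    constructor
    · have := hδ₁' (lt_of_lt_of_le hd (min_le_left _ _)); rwa [Real.dist_eq] at this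
    · have := hδ₂' (lt_of_lt_of_le hd (min_le_right _ _)); rwa [Real.dist_eq] at this
  -- choose the level c avoiding all vertex values
  set V : Finset ℝ := (Finset.range (N+1) ×ˢ Finset.range (N+1)).image
    (fun p => g (P p.1 p.2)) with hV_def
  have hIooInf : (Ioo (0:ℝ) (min ε (1/2))).Infinite :=
    Ioo_infinite (lt_min hε (by norm_num))
  obtain ⟨c, hcIoo, hcV⟩ := (hIooInf.diff V.finite_toSet).nonempty
  have hc0 : 0 < c := hcIoo.1
  have hcε : c < ε := lt_of_lt_of_le hcIoo.2 (min_le_left _ _)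
  have hc12 : c < 1/2 := lt_of_lt_of_le hcIoo.2 (min_le_right _ _)
  have hcv : ∀ i j : ℕ, i ≤ N → j ≤ N → g (P i j) ≠ c := by
    intro i j hi hj h
    apply hcV
    simp only [hV_def, Finset.coe_image, Set.mem_image, Finset.mem_coe,
      Finset.mem_product, Finset.mem_range]
    exact ⟨(i,j), ⟨by omega, by omega⟩, h⟩
  -- vertex labels
  set a : ℕ → ℕ → ZMod 2 := fun i j => if c < g (P i j) then 1 else 0 with ha_def
  set χh : ℕ → ℕ → ZMod 2 := fun i j => chi g u c (P i j) (P (i+1) j) with hχh_def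
  set χv : ℕ → ℕ → ZMod 2 := fun i j => chi g u c (P i j) (P i (j+1)) with hχv_def
  -- basic chi facts
  have chi_nocross : ∀ p q : I × I, ¬ ((g p - c) * (g q - c) < 0) → chi g u c p q = 0 := by
    intro p q h; simp only [chi]; split_ifs with hh
    · exact absurd hh.1 h
    · rfl
  have chi_nou : ∀ p q : I × I, ¬ (0 < u p) → chi g u c p q = 0 := by
    intro p q h; simp only [chi]; split_ifs with hh
    · exact absurd hh.2 h
    · rfl
  have chi_cross_bound : ∀ p q : I × I, |g p - g q| < ε → (g p - c) * (g q - c) < 0 →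
      |g p - c| < ε ∧ |g q - c| < ε := by
    intro p q hpq hcr
    have hb := abs_lt.mp hpq
    rcases mul_neg_iff.mp hcr with ⟨h1, h2⟩ | ⟨h1, h2⟩
    · exact ⟨abs_lt.2 ⟨by linarith, by linarith⟩, abs_lt.2 ⟨by linarith, by linarith⟩⟩
    · exact ⟨abs_lt.2 ⟨by linarith, by linarith⟩, abs_lt.2 ⟨by linarith, by linarith⟩⟩
  -- if g is within 2ε of c then u is big
  have u_big : ∀ p : I × I, |g p - c| < 2*ε → ε ^ 2 < u p ^ 2 := by
    intro p h
    have h2 := abs_sub_abs_le_abs_sub (g p) c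
    have h3 : |c| = c := abs_of_pos hc0
    have hgp : |g p| < 3 * ε := by linarith
    have hm4 : 4 * ε ≤ m := by linarith
    have h5 : g p ^ 2 < 9 * ε ^ 2 := by nlinarith [sq_abs (g p), abs_nonneg (g p)]
    have h6 := hm2 p
    nlinarith [hε]
  have upos_of : ∀ x : ℝ, ε ^ 2 < x ^ 2 → 0 < x → ε < x := by
    intro x hx h; nlinarith [hε]
  have uneg_of : ∀ x : ℝ, ε ^ 2 < x ^ 2 → ¬ (0 < x) → x < -ε := by
    intro x hx h; push_neg at h; nlinarith [hε]
  have u_sign : ∀ p q : I × I, |u p - u q| < ε → ε^2 < u p ^ 2 → ε^2 < u q ^ 2 →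
      (0 < u p ↔ 0 < u q) := by
    intro p q hpq hp hq
    have hb := abs_lt.mp hpq
    constructor
    · intro h
      by_contra h'
      have := upos_of _ hp h; have := uneg_of _ hq h'; linarith
    · intro h
      by_contra h'
      have := upos_of _ hq h; have := uneg_of _ hp h'; linarith
  -- the fundamental edge identity
  have chi_eq : ∀ i j i' j' : ℕ, i ≤ N → j ≤ N → i' ≤ N → j' ≤ N →
      (¬ ((g (P i j) - c) * (g (P i' j') - c) < 0) ∨ 0 < u (P i j)) →
      chi g u c (P i j) (P i' j') = a i j + a i' j' := by
    intro i j i' j' hi hj hi' hj' hyp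
    have hp := hcv i j hi hj
    have hq := hcv i' j' hi' hj'
    by_cases hcr : (g (P i j) - c) * (g (P i' j') - c) < 0
    · have hup : 0 < u (P i j) := by tauto
      have : chi g u c (P i j) (P i' j') = 1 := by
        simp only [chi, if_pos (⟨hcr, hup⟩ : _ ∧ _)]
      rw [this]
      rcases mul_neg_iff.mp hcr with ⟨h1, h2⟩ | ⟨h1, h2⟩
      · simp only [ha_def]
        rw [if_pos (by linarith), if_neg (by intro hh; linarith)]
        decide
      · simp only [ha_def]
        rw [if_neg (by intro hh; linarith), if_pos (by linarith)]
        decide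
    · rw [chi_nocross _ _ hcr]
      have hprod : 0 < (g (P i j) - c) * (g (P i' j') - c) := by
        rcases (not_lt.mp hcr : (0:ℝ) ≤ _).eq_or_lt.imp Eq.symm id with h | h
        · exfalso
          rcases mul_eq_zero.mp h with h' | h'
          · exact hp (by linarith [sub_eq_zero.mp h'])
          · exact hq (by linarith [sub_eq_zero.mp h'])
        · exact h
      rcases mul_pos_iff.mp hprod with ⟨h1, h2⟩ | ⟨h1, h2⟩
      · simp only [ha_def]
        rw [if_pos (by linarith), if_pos (by linarith)]
        decide
      · simp only [ha_def]
        rw [if_neg (by intro hh; linarith), if_neg (by intro hh; linarith)]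
        decide
  -- the cell lemma
  have cell : ∀ i j : ℕ, i < N → j < N →
      χh i j + χh i (j+1) + χv i j + χv (i+1) j = 0 := by
    intro i j hi hj
    have hiN : i ≤ N := hi.le
    have hi1N : i + 1 ≤ N := hi
    have hjN : j ≤ N := hj.le
    have hj1N : j + 1 ≤ N := hj
    have key : ∀ x1 y1 : ℕ, (x1 = i ∨ x1 = i+1) → (y1 = i ∨ y1 = i+1) →
        |(x1:ℝ) - y1| ≤ 1 := by
      rintro x1 y1 (rfl|rfl) (rfl|rfl) <;> rw [abs_le] <;> push_cast <;>
        constructor <;> linarith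
    have keyj : ∀ x1 y1 : ℕ, (x1 = j ∨ x1 = j+1) → (y1 = j ∨ y1 = j+1) →
        |(x1:ℝ) - y1| ≤ 1 := by
      rintro x1 y1 (rfl|rfl) (rfl|rfl) <;> rw [abs_le] <;> push_cast <;>
        constructor <;> linarith
    have hcl : ∀ x1 x2 y1 y2 : ℕ, (x1 = i ∨ x1 = i+1) → (x2 = j ∨ x2 = j+1) →
        (y1 = i ∨ y1 = i+1) → (y2 = j ∨ y2 = j+1) →
        |g (P x1 x2) - g (P y1 y2)| < ε ∧ |u (P x1 x2) - u (P y1 y2)| < ε := by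
      intro x1 x2 y1 y2 h1 h2 h3 h4
      exact hclose x1 x2 y1 y2 (key _ _ h1 h3) (keyj _ _ h2 h4)
    by_cases hcr : ((g (P i j) - c) * (g (P (i+1) j) - c) < 0) ∨
        ((g (P i (j+1)) - c) * (g (P (i+1) (j+1)) - c) < 0) ∨
        ((g (P i j) - c) * (g (P i (j+1)) - c) < 0) ∨
        ((g (P (i+1) j) - c) * (g (P (i+1) (j+1)) - c) < 0)
    · -- a crossing exists: all four corners have |g - c| < 2ε
      have main : ∀ p1 p2 : ℕ, (p1 = i ∨ p1 = i+1) → (p2 = j ∨ p2 = j+1) →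
          |g (P p1 p2) - c| < ε →
          ∀ x1 x2 : ℕ, (x1 = i ∨ x1 = i+1) → (x2 = j ∨ x2 = j+1) →
          |g (P x1 x2) - c| < 2*ε := by
        intro p1 p2 hp1 hp2 hpc x1 x2 hx1 hx2
        have h1 := (hcl x1 x2 p1 p2 hx1 hx2 hp1 hp2).1
        calc |g (P x1 x2) - c| ≤ |g (P x1 x2) - g (P p1 p2)| + |g (P p1 p2) - c| :=
              abs_sub_le _ _ _
          _ < ε + ε := by linarith
          _ = 2*ε := by ring
      have hall : ∀ x1 x2 : ℕ, (x1 = i ∨ x1 = i+1) → (x2 = j ∨ x2 = j+1) →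
          |g (P x1 x2) - c| < 2*ε := by
        rcases hcr with h|h|h|h
        · exact main i j (Or.inl rfl) (Or.inl rfl)
            (chi_cross_bound _ _ (hcl i j (i+1) j (Or.inl rfl) (Or.inl rfl)
              (Or.inr rfl) (Or.inl rfl)).1 h).1
        · exact main i (j+1) (Or.inl rfl) (Or.inr rfl)
            (chi_cross_bound _ _ (hcl i (j+1) (i+1) (j+1) (Or.inl rfl) (Or.inr rfl)
              (Or.inr rfl) (Or.inr rfl)).1 h).1
        · exact main i j (Or.inl rfl) (Or.inl rfl)
            (chi_cross_bound _ _ (hcl i j i (j+1) (Or.inl rfl) (Or.inl rfl)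
              (Or.inl rfl) (Or.inr rfl)).1 h).1
        · exact main (i+1) j (Or.inr rfl) (Or.inl rfl)
            (chi_cross_bound _ _ (hcl (i+1) j (i+1) (j+1) (Or.inr rfl) (Or.inl rfl)
              (Or.inr rfl) (Or.inr rfl)).1 h).1
      have hbig : ∀ x1 x2 : ℕ, (x1 = i ∨ x1 = i+1) → (x2 = j ∨ x2 = j+1) →
          ε^2 < u (P x1 x2) ^ 2 := fun x1 x2 h1 h2 => u_big _ (hall x1 x2 h1 h2)
      by_cases hupos : 0 < u (P i j)
      · have hpos : ∀ x1 x2 : ℕ, (x1 = i ∨ x1 = i+1) → (x2 = j ∨ x2 = j+1) →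
            0 < u (P x1 x2) := by
          intro x1 x2 h1 h2
          exact (u_sign _ _ (hcl i j x1 x2 (Or.inl rfl) (Or.inl rfl) h1 h2).2
            (hbig i j (Or.inl rfl) (Or.inl rfl)) (hbig x1 x2 h1 h2)).1 hupos
        simp only [hχh_def, hχv_def]
        rw [chi_eq i j (i+1) j hiN hjN hi1N hjN (Or.inr hupos),
            chi_eq i (j+1) (i+1) (j+1) hiN hj1N hi1N hj1N
              (Or.inr (hpos i (j+1) (Or.inl rfl) (Or.inr rfl))),
            chi_eq i j i (j+1) hiN hjN hiN hj1N (Or.inr hupos),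
            chi_eq (i+1) j (i+1) (j+1) hi1N hjN hi1N hj1N
              (Or.inr (hpos (i+1) j (Or.inr rfl) (Or.inl rfl)))]
        have hfin : ∀ x y z w : ZMod 2, x + y + (z + w) + (x + z) + (y + w) = 0 := by decide
        exact hfin _ _ _ _
      · have hneg : ∀ x1 x2 : ℕ, (x1 = i ∨ x1 = i+1) → (x2 = j ∨ x2 = j+1) →
            ¬ (0 < u (P x1 x2)) := by
          intro x1 x2 h1 h2 h
          exact hupos ((u_sign _ _ (hcl i j x1 x2 (Or.inl rfl) (Or.inl rfl) h1 h2).2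
            (hbig i j (Or.inl rfl) (Or.inl rfl)) (hbig x1 x2 h1 h2)).2 h)
        simp only [hχh_def, hχv_def]
        rw [chi_nou _ _ (hneg i j (Or.inl rfl) (Or.inl rfl)),
            chi_nou _ _ (hneg i (j+1) (Or.inl rfl) (Or.inr rfl)),
            chi_nou _ _ (hneg i j (Or.inl rfl) (Or.inl rfl)),
            chi_nou _ _ (hneg (i+1) j (Or.inr rfl) (Or.inl rfl))]
        decide
    · push_neg at hcr
      obtain ⟨h1, h2, h3, h4⟩ := hcr
      simp only [hχh_def, hχv_def]
      rw [chi_nocross _ _ (not_lt.2 h1), chi_nocross _ _ (not_lt.2 h2),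
        chi_nocross _ _ (not_lt.2 h3), chi_nocross _ _ (not_lt.2 h4)]
      decide
  -- boundary values
  have hgP0 : ∀ i : ℕ, g (P i 0) = -1 := by
    intro i
    have h : P i 0 = (vtx i, (0:I)) := by simp only [hP_def]; rw [hv0]
    rw [h]; exact hbot _
  have hgPN : ∀ i : ℕ, g (P i N) = 1 := by
    intro i
    have h : P i N = (vtx i, (1:I)) := by simp only [hP_def]; rw [hvN]
    rw [h]; exact htop _
  have hgL : ∀ j : ℕ, g (P 0 j) = 2 * (vtx j : ℝ) - 1 := by
    intro j
    have h : P 0 j = ((0:I), vtx j) := by simp only [hP_def]; rw [hv0]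
    rw [h]; exact hleft _
  have hgR : ∀ j : ℕ, g (P N j) = 2 * (vtx j : ℝ) - 1 := by
    intro j
    have h : P N j = ((1:I), vtx j) := by simp only [hP_def]; rw [hvN]
    rw [h]; exact hright _
  -- bottom and top rows have no crossing
  have hχh0 : ∀ i : ℕ, χh i 0 = 0 := by
    intro i
    simp only [hχh_def]
    apply chi_nocross
    rw [hgP0 i, hgP0 (i+1)]
    intro h; nlinarith
  have hχhN : ∀ i : ℕ, χh i N = 0 := by
    intro i
    simp only [hχh_def]
    apply chi_nocross
    rw [hgPN i, hgPN (i+1)]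
    intro h; nlinarith
  -- left edge: every crossing happens where u > 0
  have hχv0 : ∀ j : ℕ, j < N → χv 0 j = a 0 j + a 0 (j+1) := by
    intro j hj
    simp only [hχv_def]
    apply chi_eq 0 j 0 (j+1) (Nat.zero_le N) hj.le (Nat.zero_le N) hj
    by_cases hcr : (g (P 0 j) - c) * (g (P 0 (j+1)) - c) < 0
    · right
      have hb := chi_cross_bound _ _ (hclose 0 j 0 (j+1) (by simp) (by
          rw [abs_le]; push_cast; constructor <;> linarith)).1 hcr
      have htri : |g (P 0 j)| ≤ |g (P 0 j) - c| + |c| := by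
        simpa using abs_sub_le (g (P 0 j)) c 0
      rw [abs_of_pos hc0] at htri
      have h1 : |g (P 0 j)| < 2 * ε := by linarith [hb.1]
      rw [hgL j] at h1
      have hdist : dist (P 0 j) w0 < ρ₀ := by
        have hPeq : P 0 j = ((0:I), vtx j) := by simp only [hP_def]; rw [hv0]
        rw [hPeq, hw0_def, Prod.dist_eq]
        apply max_lt
        · simpa using hρ₀
        · rw [Subtype.dist_eq, hhalfco, Real.dist_eq]
          have h2 : |(vtx j : ℝ) - 1/2| < ε := by
            rw [abs_lt] at h1 ⊢; constructor <;> linarith [h1.1, h1.2]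
          linarith [hερ₀]
      exact hball₀ hdist
    · left; exact hcr
  -- right edge: crossings happen where u < 0, so they do not count
  have hχvN : ∀ j : ℕ, j < N → χv N j = 0 := by
    intro j hj
    simp only [hχv_def]
    by_cases hcr : (g (P N j) - c) * (g (P N (j+1)) - c) < 0
    · apply chi_nou
      have hb := chi_cross_bound _ _ (hclose N j N (j+1) (by simp) (by
          rw [abs_le]; push_cast; constructor <;> linarith)).1 hcr
      have htri : |g (P N j)| ≤ |g (P N j) - c| + |c| := by
        simpa using abs_sub_le (g (P N j)) c 0
      rw [abs_of_pos hc0] at htri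
      have h1 : |g (P N j)| < 2 * ε := by linarith [hb.1]
      rw [hgR j] at h1
      have hdist : dist (P N j) w1 < ρ₁ := by
        have hPeq : P N j = ((1:I), vtx j) := by simp only [hP_def]; rw [hvN]
        rw [hPeq, hw1_def, Prod.dist_eq]
        apply max_lt
        · simpa using hρ₁
        · rw [Subtype.dist_eq, hhalfco, Real.dist_eq]
          have h2 : |(vtx j : ℝ) - 1/2| < ε := by
            rw [abs_lt] at h1 ⊢; constructor <;> linarith [h1.1, h1.2]
          linarith [hερ₁]
      exact not_lt.2 (hball₁ hdist).le
    · exact chi_nocross _ _ hcr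
  -- corner labels
  have ha00 : a 0 0 = 0 := by
    simp only [ha_def]
    rw [if_neg]
    rw [hgP0 0]; intro h; linarith
  have ha0N : a 0 N = 1 := by
    simp only [ha_def]
    rw [if_pos]
    rw [hgPN 0]; linarith
  -- the grand sum
  have hzero : (0 : ZMod 2) = ∑ i ∈ Finset.range N, ∑ j ∈ Finset.range N,
      (χh i j + χh i (j+1) + χv i j + χv (i+1) j) := by
    symm
    apply Finset.sum_eq_zero
    intro i hi
    apply Finset.sum_eq_zero
    intro j hj
    exact cell i j (Finset.mem_range.mp hi) (Finset.mem_range.mp hj)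
  have hsplit : ∑ i ∈ Finset.range N, ∑ j ∈ Finset.range N,
      (χh i j + χh i (j+1) + χv i j + χv (i+1) j)
      = (∑ i ∈ Finset.range N, (χh i 0 + χh i N))
        + (∑ j ∈ Finset.range N, (χv 0 j + χv N j)) := by
    have step1 : ∀ i, ∑ j ∈ Finset.range N, (χh i j + χh i (j+1) + χv i j + χv (i+1) j)
        = (χh i 0 + χh i N) + ∑ j ∈ Finset.range N, (χv i j + χv (i+1) j) := by
      intro i
      have h : ∀ j, χh i j + χh i (j+1) + χv i j + χv (i+1) j
          = (χh i j + χh i (j+1)) + (χv i j + χv (i+1) j) := fun j => by ring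
      rw [Finset.sum_congr rfl (fun j _ => h j), Finset.sum_add_distrib, tele N (χh i)]
    rw [Finset.sum_congr rfl (fun i _ => step1 i), Finset.sum_add_distrib]
    congr 1
    rw [Finset.sum_comm]
    exact Finset.sum_congr rfl fun j _ => tele N (fun i => χv i j)
  have hfinal : (0 : ZMod 2) = 1 := by
    rw [hzero, hsplit]
    rw [Finset.sum_eq_zero (fun i _ => by rw [hχh0 i, hχhN i]; decide)]
    rw [Finset.sum_congr rfl (fun j hj => by
      rw [hχv0 j (Finset.mem_range.mp hj), hχvN j (Finset.mem_range.mp hj), add_zero])]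
    rw [tele N (a 0), ha00, ha0N]
    decide
  exact absurd hfinal (by decide)

end LineKProof

namespace LineKProof

open unitInterval Set Metric

variable (k : ℕ)

lemma continuous_mk (i : Fin k) : Continuous (LineK.mk k i) :=
  continuous_quot_mk.comp (Continuous.prodMk_right i)

lemma proj_continuous : Continuous (LineK.proj k) :=
  continuous_quot_lift _ continuous_snd

@[simp] lemma proj_mk (i : Fin k) (x : ℝ) : LineK.proj k (LineK.mk k i x) = x := rfl

lemma mk_eq_mk (i j : Fin k) {x : ℝ} (hx : x ≠ 0) : LineK.mk k i x = LineK.mk k j x :=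
  Quotient.sound ⟨rfl, Or.inl hx⟩

lemma origin_ne (i j : Fin k) (h : i ≠ j) : LineK.origin k i ≠ LineK.origin k j := by
  intro he
  obtain ⟨-, h2⟩ := Quotient.exact he
  rcases h2 with h' | h'
  · exact h' rfl
  · exact h h'

lemma mk_eq_origin_iff (p : Fin k × ℝ) (i : Fin k) :
    Quotient.mk (lineSetoid k) p = LineK.origin k i ↔ p = (i, 0) := by
  constructor
  · intro h
    obtain ⟨h1, h2⟩ := Quotient.exact h
    rcases h2 with h' | h'
    · exact absurd h1 h'
    · exact Prod.ext h' h1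
  · rintro rfl; rfl

lemma isClosed_origin (i : Fin k) : IsClosed ({LineK.origin k i} : Set (LineK k)) := by
  rw [← isOpen_compl_iff]
  refine (isQuotientMap_quot_mk (r := (lineSetoid k).r)).isOpen_preimage.mp ?_
  have h : Quot.mk _ ⁻¹' (({LineK.origin k i} : Set (LineK k))ᶜ) = ({(i, (0:ℝ))} : Set _)ᶜ := by
    ext p
    simp only [mem_preimage, mem_compl_iff, mem_singleton_iff]
    exact not_congr (mk_eq_origin_iff k p i)
  exact h ▸ isClosed_singleton.isOpen_compl

lemma proj_zero_iff (y : LineK k) : LineK.proj k y = 0 ↔ ∃ i, y = LineK.origin k i := by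
  induction y using Quotient.ind with
  | _ p =>
    constructor
    · intro h
      refine ⟨p.1, ?_⟩
      rw [show p = (p.1, p.2) from rfl] at *
      rw [show p.2 = 0 from h]
      rfl
    · rintro ⟨i, hi⟩
      rw [hi]
      rfl

lemma isClosed_others (i0 : Fin k) :
    IsClosed {y : LineK k | LineK.proj k y = 0 ∧ y ≠ LineK.origin k i0} := by
  have h : {y : LineK k | LineK.proj k y = 0 ∧ y ≠ LineK.origin k i0}
      = ⋃ i ∈ ({i0}ᶜ : Set (Fin k)), {LineK.origin k i} := by
    ext y
    simp only [mem_setOf_eq, mem_iUnion, mem_compl_iff, mem_singleton_iff, exists_prop]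
    constructor
    · rintro ⟨h1, h2⟩
      obtain ⟨i, rfl⟩ := (proj_zero_iff k y).mp h1
      exact ⟨i, fun hii => h2 (by rw [hii]), rfl⟩
    · rintro ⟨i, hii, rfl⟩
      exact ⟨rfl, origin_ne k i i0 hii⟩
  rw [h]
  exact (Set.toFinite _).isClosed_biUnion fun i _ => isClosed_origin k i

end LineKProof

open LineKProof unitInterval Set Metric in
/-- For every integer `k ≥ 2`, `L_k^♯` is not contractible. -/
theorem stmt7 (k : ℕ) (hk : 2 ≤ k) :
    ¬ ContractibleSpace (LineK k) := by
  intro hcon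
  haveI := hcon
  set i0 : Fin k := ⟨0, by omega⟩ with hi0_def
  set i1 : Fin k := ⟨1, by omega⟩ with hi1_def
  have hi01 : i1 ≠ i0 := by
    intro h
    have h' := congrArg Fin.val h
    simp [hi0_def, hi1_def] at h'
  have hcont : ∀ i : Fin k, Continuous fun t : I => LineK.mk k i (2 * (t:ℝ) - 1) := by
    intro i
    exact (continuous_mk k i).comp (by continuity)
  have hsrc : ∀ i : Fin k, LineK.mk k i (2 * ((0:I):ℝ) - 1) = LineK.mk k i0 (-1) := by
    intro i
    rw [show (2 * ((0:I):ℝ) - 1) = -1 by norm_num]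
    exact mk_eq_mk k i i0 (by norm_num)
  have htgt : ∀ i : Fin k, LineK.mk k i (2 * ((1:I):ℝ) - 1) = LineK.mk k i0 1 := by
    intro i
    rw [show (2 * ((1:I):ℝ) - 1) = 1 by norm_num]
    exact mk_eq_mk k i i0 (by norm_num)
  let γ0 : Path (LineK.mk k i0 (-1)) (LineK.mk k i0 1) :=
    ⟨⟨fun t => LineK.mk k i0 (2*(t:ℝ)-1), hcont i0⟩, hsrc i0, htgt i0⟩
  let γ1 : Path (LineK.mk k i0 (-1)) (LineK.mk k i0 1) :=
    ⟨⟨fun t => LineK.mk k i1 (2*(t:ℝ)-1), hcont i1⟩, hsrc i1, htgt i1⟩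
  obtain ⟨F⟩ := SimplyConnectedSpace.paths_homotopic γ0 γ1
  have hF0 : ∀ t : I, F (0, t) = LineK.mk k i0 (2*(t:ℝ)-1) := fun t => F.apply_zero t
  have hF1 : ∀ t : I, F (1, t) = LineK.mk k i1 (2*(t:ℝ)-1) := fun t => F.apply_one t
  have hFs0 : ∀ s : I, F (s, 0) = LineK.mk k i0 (-1) := by
    intro s
    have h := F.eq_fst s (Set.mem_insert (0:I) {1})
    rw [h]
    exact hsrc i0
  have hFs1 : ∀ s : I, F (s, 1) = LineK.mk k i0 1 := by
    intro s
    have h := F.eq_fst s (Set.mem_insert_of_mem (0:I) rfl)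
    rw [h]
    exact htgt i0
  set half : I := ⟨1/2, by norm_num, by norm_num⟩ with hhalf_def
  have hhc : (half : ℝ) = 1/2 := rfl
  set W : Set (I × I) := (fun q : I × I => F q) ⁻¹' {LineK.origin k i0} with hW_def
  set B : Set (I × I) := (fun q : I × I => F q) ⁻¹'
      {y | LineK.proj k y = 0 ∧ y ≠ LineK.origin k i0} with hB_def
  have hFcont : Continuous (fun q : I × I => F q) := F.continuous
  have hWclosed : IsClosed W := (isClosed_origin k i0).preimage hFcont
  have hBclosed : IsClosed B := (isClosed_others k i0).preimage hFcont
  have hw0W : ((0:I), half) ∈ W := by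
    simp only [hW_def, mem_preimage, mem_singleton_iff]
    rw [hF0 half, show (2*(half:ℝ)-1) = 0 by rw [hhc]; norm_num]
    rfl
  have hw1B : ((1:I), half) ∈ B := by
    simp only [hB_def, mem_preimage, mem_setOf_eq]
    rw [hF1 half, show (2*(half:ℝ)-1) = 0 by rw [hhc]; norm_num]
    exact ⟨rfl, origin_ne k i1 i0 hi01⟩
  set u : I × I → ℝ := fun q => infDist q B - infDist q W with hu_def
  have hucont : Continuous u := (continuous_infDist_pt B).sub (continuous_infDist_pt W)
  set g : I × I → ℝ := fun q => LineK.proj k (F q) with hg_def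
  have hgcont : Continuous g := (proj_continuous k).comp hFcont
  have hWpos : ∀ q, q ∈ W → 0 < u q := by
    intro q hq
    have h1 : infDist q W = 0 := infDist_zero_of_mem hq
    have h2 : 0 < infDist q B := by
      rw [← hBclosed.notMem_iff_infDist_pos ⟨_, hw1B⟩]
      intro hqB
      exact hqB.2 hq
    simp only [hu_def]; linarith
  have hBneg : ∀ q, q ∈ B → u q < 0 := by
    intro q hq
    have h1 : infDist q B = 0 := infDist_zero_of_mem hq
    have h2 : 0 < infDist q W := by
      rw [← hWclosed.notMem_iff_infDist_pos ⟨_, hw0W⟩]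
      intro hqW
      exact hq.2 hqW
    simp only [hu_def]; linarith
  have h0 : ∀ q, g q = 0 → u q ≠ 0 := by
    intro q hgq
    by_cases hii : F q = LineK.origin k i0
    · exact (hWpos q hii).ne'
    · exact (hBneg q ⟨hgq, hii⟩).ne
  have hbot : ∀ s : I, g (s, 0) = -1 := by
    intro s; simp only [hg_def]; rw [hFs0 s]; rfl
  have htop : ∀ s : I, g (s, 1) = 1 := by
    intro s; simp only [hg_def]; rw [hFs1 s]; rfl
  have hleft : ∀ t : I, g (0, t) = 2 * t - 1 := by
    intro t; simp only [hg_def]; rw [hF0 t]; rfl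
  have hright : ∀ t : I, g (1, t) = 2 * t - 1 := by
    intro t; simp only [hg_def]; rw [hF1 t]; rfl
  have hlu : ∀ t : I, g (0, t) = 0 → 0 < u (0, t) := by
    intro t h
    rw [hleft t] at h
    apply hWpos
    show F (0, t) = LineK.origin k i0
    rw [hF0 t, h]
    rfl
  have hru : ∀ t : I, g (1, t) = 0 → u (1, t) < 0 := by
    intro t h
    have h' := h
    rw [hright t] at h'
    apply hBneg
    refine ⟨h, ?_⟩
    intro he
    rw [show (fun q : I × I => F q) (1, t) = F (1, t) from rfl, hF1 t, h'] at he
    exact origin_ne k i1 i0 hi01 he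
  exact no_winding g u hgcont hucont h0 hbot htop hleft hright hlu hru
end

section
/- For every integer k ≥ 2 and every ε > 0, the preimage p⁻¹((−ε, ε)) of the open interval (−ε, ε) under the canonical projection p : L_k^♯ → ℝ is a connected subset of L_k^♯; consequently p⁻¹((−ε, ε)) cannot be written as a disjoint union of two nonempty open sets, and in particular cannot be split into disjoint open sheets each mapped homeomorphically onto (−ε, ε). -/

lemma LineK.continuous_mk (k : ℕ) (i : Fin k) : Continuous (LineK.mk k i) := by
  have h1 : Continuous (Quotient.mk (lineSetoid k)) := continuous_quot_mk
  exact h1.comp (Continuous.prodMk_right i)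

lemma LineK.proj_mk (k : ℕ) (i : Fin k) (x : ℝ) : LineK.proj k (LineK.mk k i x) = x := rfl

lemma LineK.mk_eq_mk (k : ℕ) (i j : Fin k) (x : ℝ) (hx : x ≠ 0) :
    LineK.mk k i x = LineK.mk k j x :=
  Quotient.sound ⟨rfl, Or.inl hx⟩

lemma LineK.preimage_eq (k : ℕ) (ε : ℝ) :
    LineK.proj k ⁻¹' Set.Ioo (-ε) ε = ⋃ i : Fin k, LineK.mk k i '' Set.Ioo (-ε) ε := by
  ext q
  constructor
  · intro hq
    obtain ⟨⟨i, x⟩, rfl⟩ := Quotient.exists_rep q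
    exact Set.mem_iUnion.2 ⟨i, ⟨x, hq, rfl⟩⟩
  · rintro hq
    obtain ⟨i, x, hx, rfl⟩ := Set.mem_iUnion.1 hq
    exact hx

/-- For every integer `k ≥ 2` and every `ε > 0`, the preimage
`p⁻¹((−ε, ε))` is connected; consequently it is not a disjoint union of two
nonempty open sets, and in particular it cannot be split into disjoint open
sheets each mapped homeomorphically by `p` onto `(−ε, ε)`. -/
theorem stmt13 (k : ℕ) (hk : 2 ≤ k) (ε : ℝ) (hε : 0 < ε) :
    IsConnected (LineK.proj k ⁻¹' Set.Ioo (-ε) ε) ∧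
    (¬ ∃ U V : Set (LineK k), IsOpen U ∧ IsOpen V ∧ U.Nonempty ∧ V.Nonempty ∧
        Disjoint U V ∧ LineK.proj k ⁻¹' Set.Ioo (-ε) ε = U ∪ V) ∧
    (¬ ∃ (ι : Type) (S : ι → Set (LineK k)), (∀ a, IsOpen (S a)) ∧
        Pairwise (Function.onFun Disjoint S) ∧
        LineK.proj k ⁻¹' Set.Ioo (-ε) ε = ⋃ a, S a ∧
        ∀ a, ∃ e : (S a) ≃ₜ (Set.Ioo (-ε) ε),
          ∀ q, (e q : ℝ) = LineK.proj k q) := by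

  have hlt : -ε < ε := by linarith
  have hk0 : (0 : ℕ) < k := by omega
  have hk1 : (1 : ℕ) < k := by omega
  let i0 : Fin k := ⟨0, hk0⟩
  let i1 : Fin k := ⟨1, hk1⟩
  have hne : LineK.origin k i0 ≠ LineK.origin k i1 := by
    intro h
    have := Quotient.exact h
    rcases this.2 with h' | h'
    · exact h' rfl
    · simp [i0, i1, Fin.ext_iff] at h'
  have horigin : ∀ i : Fin k, LineK.origin k i ∈ LineK.proj k ⁻¹' Set.Ioo (-ε) ε := by
    intro i
    simp only [LineK.origin, Set.mem_preimage, LineK.proj_mk, Set.mem_Ioo]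
    exact ⟨by linarith, hε⟩
  have hproj0 : ∀ i : Fin k, LineK.proj k (LineK.origin k i) = 0 := fun i => rfl
  have hconn : IsConnected (LineK.proj k ⁻¹' Set.Ioo (-ε) ε) := by
    rw [LineK.preimage_eq]
    have hhalf : (ε / 2 : ℝ) ∈ Set.Ioo (-ε) ε := by
      constructor <;> [linarith; linarith]
    refine ⟨⟨LineK.mk k i0 (ε/2), Set.mem_iUnion.2 ⟨i0, ⟨ε/2, hhalf, rfl⟩⟩⟩, ?_⟩
    apply isPreconnected_iUnion
    · refine ⟨LineK.mk k i0 (ε/2), ?_⟩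
      intro s hs
      simp only [Set.mem_range] at hs
      obtain ⟨i, rfl⟩ := hs
      exact ⟨ε/2, hhalf, (LineK.mk_eq_mk k i i0 (ε/2) (by positivity)).symm ▸ rfl⟩
    · intro i
      exact (isPreconnected_Ioo).image _ (LineK.continuous_mk k i).continuousOn
  refine ⟨hconn, ?_, ?_⟩
  · rintro ⟨U, V, hU, hV, hUne, hVne, hdisj, heq⟩
    have := hconn.isPreconnected
    rw [heq] at this
    have h := this U V hU hV le_rfl
      ⟨hUne.choose, Set.mem_inter (Or.inl hUne.choose_spec) hUne.choose_spec⟩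
      ⟨hVne.choose, Set.mem_inter (Or.inr hVne.choose_spec) hVne.choose_spec⟩
    obtain ⟨x, _, hx⟩ := h
    exact (hdisj.le_bot ⟨hx.1, hx.2⟩ : x ∈ (⊥ : Set (LineK k)))
  · rintro ⟨ι, S, hopen, hpair, hcover, hsheet⟩
    have h0 : LineK.origin k i0 ∈ ⋃ a, S a := hcover ▸ horigin i0
    have h1 : LineK.origin k i1 ∈ ⋃ a, S a := hcover ▸ horigin i1
    obtain ⟨a, ha⟩ := Set.mem_iUnion.1 h0
    obtain ⟨b, hb⟩ := Set.mem_iUnion.1 h1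
    by_cases hab : a = b
    · subst hab
      obtain ⟨e, he⟩ := hsheet a
      have : e ⟨_, ha⟩ = e ⟨_, hb⟩ := by
        apply Subtype.ext
        rw [he, he, hproj0, hproj0]
      have := e.injective this
      exact hne (congrArg Subtype.val this)
    · have := hconn.isPreconnected
      rw [hcover] at this
      have h := this (S a) (⋃ c ∈ ({a}ᶜ : Set ι), S c) (hopen a)
        (isOpen_biUnion fun c _ => hopen c)
        (by
          intro x hx
          obtain ⟨c, hc⟩ := Set.mem_iUnion.1 hx
          by_cases hca : c = a
          · exact Or.inl (hca ▸ hc)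
          · exact Or.inr (Set.mem_biUnion hca hc))
        ⟨_, Set.mem_inter (Set.mem_iUnion.2 ⟨a, ha⟩) ha⟩
        ⟨_, Set.mem_inter (Set.mem_iUnion.2 ⟨b, hb⟩)
          (Set.mem_biUnion (fun h => hab h.symm) hb)⟩
      obtain ⟨x, _, hxa, hxb⟩ := h
      obtain ⟨c, hc, hxc⟩ := Set.mem_iUnion₂.1 hxb
      exact (hpair (fun h => hc h.symm)).le_bot ⟨hxa, hxc⟩
end

section
/- For every integer k ≥ 2, the canonical projection p : L_k^♯ → ℝ does not have unique path lifting: there exist continuous maps γ̃₁, γ̃₂ : [0,1] → L_k^♯ with γ̃₁ ≠ γ̃₂, γ̃₁(0) = γ̃₂(0), and p ∘ γ̃₁ = p ∘ γ̃₂. In particular p is not a semicovering (semicoverings require continuous and unique lifting of paths from every point). -/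
/-- For every integer `k ≥ 2`, the canonical projection
`p : L_k^♯ → ℝ` does not have unique path lifting: there are two distinct
continuous paths in `L_k^♯` with the same starting point and the same
projection. In particular `p` is not a semicovering. -/
theorem stmt15 (k : ℕ) (hk : 2 ≤ k) :
    ∃ γ₁ γ₂ : unitInterval → LineK k,
      Continuous γ₁ ∧ Continuous γ₂ ∧ γ₁ ≠ γ₂ ∧ γ₁ 0 = γ₂ 0 ∧
      LineK.proj k ∘ γ₁ = LineK.proj k ∘ γ₂ := by

  haveI : NeZero k := ⟨by omega⟩
  refine ⟨fun t => LineK.mk k ⟨0, by omega⟩ ((t : ℝ) - 1/2),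
          fun t => LineK.mk k ⟨1, by omega⟩ ((t : ℝ) - 1/2), ?_, ?_, ?_, ?_, ?_⟩
  · exact (continuous_quotient_mk').comp
      ((continuous_const.prodMk (continuous_subtype_val.sub continuous_const)))
  · exact (continuous_quotient_mk').comp
      ((continuous_const.prodMk (continuous_subtype_val.sub continuous_const)))
  · intro h
    have h2 := congrFun h ⟨1/2, by norm_num, by norm_num⟩
    have := Quotient.exact h2
    obtain ⟨-, h3 | h3⟩ := this
    · simp at h3
    · simp at h3
  · apply Quotient.sound
    refine ⟨rfl, Or.inl ?_⟩
    norm_num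
  · funext t
    rfl
end

section
/- For every integer k ≥ 2, homotopy lifting fails for the canonical projection p : L_k^♯ → ℝ: there exist a continuous map H : [0,1] × [0,1] → ℝ whose bottom path s ↦ H(s,0) is a loop based at 1 (that is, H(0,0) = H(1,0) = 1), and a continuous lift γ̃ : [0,1] → L_k^♯ of the bottom path (p ∘ γ̃ = H(·,0)), such that no continuous map H̃ : [0,1] × [0,1] → L_k^♯ satisfies both p ∘ H̃ = H and H̃(s,0) = γ̃(s) for all s ∈ [0,1]. -/
namespace Stmt16Aux

/-- The homotopy, as a function of real coordinates. -/
noncomputable def hFun (x y : ℝ) : ℝ := (4 * ((x - 1/2)^2 + y^2) - 1/4) * (4/3)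

lemma hFun_cont : Continuous fun p : ℝ × ℝ => hFun p.1 p.2 := by
  unfold hFun; fun_prop

/-- The semicircle path inside the square on which `hFun` vanishes. -/
noncomputable def cPath (u : unitInterval) : unitInterval × unitInterval :=
  (⟨1/2 - Real.cos (Real.pi * u) / 4, by
      constructor <;>
        nlinarith [Real.neg_one_le_cos (Real.pi * u), Real.cos_le_one (Real.pi * u)]⟩,
   ⟨Real.sin (Real.pi * u) / 4, by
      have h1 : (0:ℝ) ≤ Real.pi * u := mul_nonneg Real.pi_pos.le u.2.1
      have h2 : Real.pi * u ≤ Real.pi := by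
        nlinarith [u.2.2, Real.pi_pos]
      have := Real.sin_nonneg_of_nonneg_of_le_pi h1 h2
      have := Real.sin_le_one (Real.pi * u)
      constructor <;> nlinarith⟩)

lemma hFun_cPath (u : unitInterval) :
    hFun ((cPath u).1 : ℝ) ((cPath u).2 : ℝ) = 0 := by
  have := Real.sin_sq_add_cos_sq (Real.pi * u)
  simp only [cPath, hFun]
  nlinarith [this]

lemma cPath_cont : Continuous cPath := by
  apply Continuous.prodMk <;> apply Continuous.subtype_mk <;> fun_prop

lemma hFun_cont1 : Continuous fun s : unitInterval => hFun (s : ℝ) 0 := by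
  unfold hFun; fun_prop

end Stmt16Aux

/-- For every integer `k ≥ 2`, homotopy lifting fails for
`p : L_k^♯ → ℝ`: there are a continuous `H : [0,1] × [0,1] → ℝ` whose bottom
path `s ↦ H(s,0)` is a loop based at `1`, and a continuous lift `γ̃` of the
bottom path, such that no continuous `H̃ : [0,1] × [0,1] → L_k^♯` satisfies
both `p ∘ H̃ = H` and `H̃(s,0) = γ̃(s)` for all `s`. -/


theorem stmt16 (k : ℕ) (hk : 2 ≤ k) :
    ∃ H : unitInterval × unitInterval → ℝ, Continuous H ∧
      H (0, 0) = 1 ∧ H (1, 0) = 1 ∧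
      ∃ γt : unitInterval → LineK k, Continuous γt ∧
        (∀ s, LineK.proj k (γt s) = H (s, 0)) ∧
        ¬ ∃ Ht : unitInterval × unitInterval → LineK k, Continuous Ht ∧
            (∀ st, LineK.proj k (Ht st) = H st) ∧
            ∀ s, Ht (s, 0) = γt s := by
  classical
  have hk0 : 0 < k := by omega
  have hk1 : 1 < k := by omega
  set i0 : Fin k := ⟨0, hk0⟩ with hi0
  set i1 : Fin k := ⟨1, hk1⟩ with hi1
  have hi01 : i1 ≠ i0 := by
    simp [hi0, hi1, Fin.ext_iff]
  refine ⟨fun st => Stmt16Aux.hFun (st.1 : ℝ) (st.2 : ℝ), ?_, ?_, ?_, ?_⟩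
  · exact Stmt16Aux.hFun_cont.comp
      ((continuous_subtype_val.comp continuous_fst).prodMk
        (continuous_subtype_val.comp continuous_snd))
  · norm_num [Stmt16Aux.hFun]
  · norm_num [Stmt16Aux.hFun]
  · set γt : unitInterval → LineK k := fun s =>
      if ((s : ℝ) ≤ 1/2) then LineK.mk k i0 (Stmt16Aux.hFun (s : ℝ) 0)
      else LineK.mk k i1 (Stmt16Aux.hFun (s : ℝ) 0) with hγt
    have hmkcont : Continuous (Quotient.mk (lineSetoid k)) := continuous_quotient_mk'
    have hhalf : Stmt16Aux.hFun (1/2 : ℝ) 0 ≠ 0 := by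
      norm_num [Stmt16Aux.hFun]
    refine ⟨γt, ?_, ?_, ?_⟩
    · -- continuity of γt
      rw [hγt]
      apply Continuous.if_le
      · exact hmkcont.comp (continuous_const.prodMk
          Stmt16Aux.hFun_cont1)
      · exact hmkcont.comp (continuous_const.prodMk Stmt16Aux.hFun_cont1)
      · exact continuous_subtype_val
      · exact continuous_const
      · intro s hs
        apply Quotient.sound
        refine ⟨rfl, Or.inl ?_⟩
        simp only [hs]
        exact hhalf
    · intro s
      rw [hγt]
      dsimp only
      split <;> rfl
    · rintro ⟨Ht, hHtc, hHtproj, hHtbot⟩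
      -- two open saturated sets separating origin 0 from the other origins
      set P0 : LineK k → Prop := Quotient.lift (fun p : Fin k × ℝ => p.2 ≠ 0 ∨ p.1 = i0)
        (by
          rintro ⟨i, x⟩ ⟨j, y⟩ ⟨h1, h2⟩
          dsimp at h1 h2 ⊢
          subst h1
          rcases h2 with h | h
          · simp [h]
          · simp [h]) with hP0
      set P1 : LineK k → Prop := Quotient.lift (fun p : Fin k × ℝ => p.2 ≠ 0 ∨ p.1 ≠ i0)
        (by
          rintro ⟨i, x⟩ ⟨j, y⟩ ⟨h1, h2⟩
          dsimp at h1 h2 ⊢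
          subst h1
          rcases h2 with h | h
          · simp [h]
          · simp [h]) with hP1
      have hopen0 : IsOpen {q : LineK k | P0 q} := by
        refine isOpen_coinduced.mpr ?_
        show IsOpen ({p : Fin k × ℝ | p.2 ≠ 0} ∪ {p : Fin k × ℝ | p.1 = i0})
        exact (isOpen_ne.preimage continuous_snd).union
          ((isOpen_discrete {i0}).preimage continuous_fst)
      have hopen1 : IsOpen {q : LineK k | P1 q} := by
        refine isOpen_coinduced.mpr ?_
        show IsOpen ({p : Fin k × ℝ | p.2 ≠ 0} ∪ Prod.fst ⁻¹' {j : Fin k | j ≠ i0})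
        exact (isOpen_ne.preimage continuous_snd).union
          ((isOpen_discrete {j : Fin k | j ≠ i0}).preimage continuous_fst)
      set g : unitInterval → LineK k := fun u => Ht (Stmt16Aux.cPath u) with hg
      have hgc : Continuous g := hHtc.comp Stmt16Aux.cPath_cont
      set A : Set unitInterval := g ⁻¹' {q | P0 q} with hA
      set B : Set unitInterval := g ⁻¹' {q | P1 q} with hB
      have hAopen : IsOpen A := hopen0.preimage hgc
      have hBopen : IsOpen B := hopen1.preimage hgc
      have hcover : (Set.univ : Set unitInterval) ⊆ A ∪ B := by
        intro u _
        obtain ⟨⟨i, x⟩, hx⟩ := Quotient.exists_rep (g u)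
        by_cases h : i = i0
        · left; simp only [hA, Set.mem_preimage, Set.mem_setOf_eq, ← hx, hP0]
          exact Or.inr h
        · right; simp only [hB, Set.mem_preimage, Set.mem_setOf_eq, ← hx, hP1]
          exact Or.inr h
      have hgzero : ∀ u, LineK.proj k (g u) = 0 := by
        intro u
        rw [hg]
        simp only [hHtproj]
        exact Stmt16Aux.hFun_cPath u
      have hdisj : A ∩ B = ∅ := by
        ext u
        simp only [Set.mem_inter_iff, Set.mem_empty_iff_false, iff_false]
        rintro ⟨huA, huB⟩
        obtain ⟨⟨i, x⟩, hx⟩ := Quotient.exists_rep (g u)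
        have hx0 : x = 0 := by
          have := hgzero u
          rw [← hx] at this
          exact this
        simp only [hA, Set.mem_preimage, Set.mem_setOf_eq, ← hx, hP0] at huA
        simp only [hB, Set.mem_preimage, Set.mem_setOf_eq, ← hx, hP1] at huB
        rcases huA with h | h
        · exact h hx0
        · rcases huB with h' | h'
          · exact h' hx0
          · exact h' h
      -- endpoints
      have hc0 : Stmt16Aux.cPath 0 = (⟨1/4, by norm_num⟩, 0) := by
        unfold Stmt16Aux.cPath
        refine Prod.ext ?_ ?_ <;> apply Subtype.ext <;> simp <;> norm_num
      have hc1 : Stmt16Aux.cPath 1 = (⟨3/4, by norm_num⟩, 0) := by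
        unfold Stmt16Aux.cPath
        refine Prod.ext ?_ ?_ <;> apply Subtype.ext <;> simp [Real.cos_pi, Real.sin_pi] <;> norm_num
      have h0A : (0 : unitInterval) ∈ A := by
        simp only [hA, Set.mem_preimage, Set.mem_setOf_eq, hg, hc0]
        rw [hHtbot]
        rw [hγt]
        have : ((⟨1/4, by norm_num⟩ : unitInterval) : ℝ) ≤ 1/2 := by norm_num
        simp only [this, if_true]
        show P0 (Quotient.mk (lineSetoid k) (i0, _))
        exact Or.inr rfl
      have h1B : (1 : unitInterval) ∈ B := by
        simp only [hB, Set.mem_preimage, Set.mem_setOf_eq, hg, hc1]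
        rw [hHtbot]
        rw [hγt]
        have : ¬ (((⟨3/4, by norm_num⟩ : unitInterval) : ℝ) ≤ 1/2) := by norm_num
        simp only [this, if_false]
        show P1 (Quotient.mk (lineSetoid k) (i1, _))
        exact Or.inr hi01
      have := isPreconnected_univ (u := A) (v := B) hAopen hBopen hcover
        ⟨0, Set.mem_univ _, h0A⟩ ⟨1, Set.mem_univ _, h1B⟩
      obtain ⟨u, -, huAB⟩ := this
      rw [hdisj] at huAB
      exact huAB
end

section
/- For every integer k ≥ 2 and every permutation σ of {1,…,k}, the map h_σ : L_k^♯ → L_k^♯ induced by (i,x) ↦ (σ(i), x) (so h_σ([x]_i) = [x]_{σ(i)} for x ≠ 0 and h_σ(o_i) = o_{σ(i)}) is a well-defined homeomorphism satisfying p ∘ h_σ = p, and the assignment σ ↦ h_σ is an injective group homomorphism from the symmetric group on k letters into the group of deck transformations of p. -/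
/-- The group of self-homeomorphisms of `L_k^♯` under composition. -/
instance (k : ℕ) : Group (LineK k ≃ₜ LineK k) where
  mul f g := g.trans f
  one := Homeomorph.refl _
  inv f := f.symm
  mul_assoc f g h := Homeomorph.ext fun _ => rfl
  one_mul f := Homeomorph.ext fun _ => rfl
  mul_one f := Homeomorph.ext fun _ => rfl
  inv_mul_cancel f := Homeomorph.ext f.symm_apply_apply

/-- The deck-transformation group `Deck(p)` of `p : L_k^♯ → ℝ`: the group of
homeomorphisms `h : L_k^♯ ≃ₜ L_k^♯` with `p ∘ h = p`. -/
def Deck (k : ℕ) : Subgroup (LineK k ≃ₜ LineK k) where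
  carrier := {h | ∀ q, LineK.proj k (h q) = LineK.proj k q}
  one_mem' := fun _ => rfl
  mul_mem' := by
    intro a b ha hb q
    exact (ha (b q)).trans (hb q)
  inv_mem' := by
    intro a ha q
    have h := ha (a.symm q)
    simpa using h.symm

/-- The map on `LineK k` induced by a permutation of the origins. -/
def permFun (k : ℕ) (σ : Equiv.Perm (Fin k)) : LineK k → LineK k :=
  Quotient.lift (fun p => LineK.mk k (σ p.1) p.2)
    (by rintro ⟨i, x⟩ ⟨j, y⟩ ⟨h1, h2⟩
        apply Quotient.sound
        exact ⟨h1, h2.imp id (fun h => congrArg σ h)⟩)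

lemma permFun_mk (k : ℕ) (σ : Equiv.Perm (Fin k)) (i : Fin k) (x : ℝ) :
    permFun k σ (LineK.mk k i x) = LineK.mk k (σ i) x := rfl

lemma permFun_continuous (k : ℕ) (σ : Equiv.Perm (Fin k)) :
    Continuous (permFun k σ) := by
  apply Continuous.quotient_lift
  exact continuous_quot_mk.comp
    ((continuous_of_discreteTopology.comp continuous_fst).prodMk continuous_snd)

/-- The homeomorphism of `LineK k` induced by a permutation. -/
def permHomeo (k : ℕ) (σ : Equiv.Perm (Fin k)) : LineK k ≃ₜ LineK k where
  toFun := permFun k σ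
  invFun := permFun k σ⁻¹
  left_inv := by
    refine Quotient.ind ?_
    rintro ⟨i, x⟩
    show permFun k σ⁻¹ (permFun k σ (LineK.mk k i x)) = LineK.mk k i x
    rw [permFun_mk, permFun_mk, Equiv.Perm.inv_def, Equiv.symm_apply_apply]
  right_inv := by
    refine Quotient.ind ?_
    rintro ⟨i, x⟩
    show permFun k σ (permFun k σ⁻¹ (LineK.mk k i x)) = LineK.mk k i x
    rw [permFun_mk, permFun_mk, Equiv.Perm.inv_def, Equiv.apply_symm_apply]
  continuous_toFun := permFun_continuous k σ
  continuous_invFun := permFun_continuous k σ⁻¹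

lemma permHomeo_deck (k : ℕ) (σ : Equiv.Perm (Fin k)) :
    permHomeo k σ ∈ Deck k := by
  refine Quotient.ind ?_
  rintro ⟨i, x⟩
  rfl

/-- For every integer `k ≥ 2` and every permutation `σ` of
`{1,…,k}`, the map `h_σ` induced by `(i,x) ↦ (σ(i),x)` is a well-defined
homeomorphism of `L_k^♯` with `p ∘ h_σ = p` (i.e. a deck transformation), and
`σ ↦ h_σ` is an injective group homomorphism `𝔖_k → Deck(p)`. -/
theorem stmt18 (k : ℕ) (hk : 2 ≤ k) :
    ∃ Φ : Equiv.Perm (Fin k) →* Deck k,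
      Function.Injective Φ ∧
      ∀ (σ : Equiv.Perm (Fin k)) (i : Fin k) (x : ℝ),
        ((Φ σ : LineK k ≃ₜ LineK k)) (LineK.mk k i x) = LineK.mk k (σ i) x := by
  refine ⟨{ toFun := fun σ => ⟨permHomeo k σ, permHomeo_deck k σ⟩
            map_one' := ?_
            map_mul' := ?_ }, ?_, ?_⟩
  · ext q
    induction q using Quotient.ind with
    | _ p => rfl
  · intro σ τ
    ext q
    induction q using Quotient.ind with
    | _ p => rfl
  · intro σ τ h
    ext i
    have h2 : permHomeo k σ (LineK.mk k i 0) = permHomeo k τ (LineK.mk k i 0) := by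
      have := congrArg (fun f : Deck k => (f : LineK k ≃ₜ LineK k) (LineK.mk k i 0)) h
      exact this
    have h3 : LineK.mk k (σ i) 0 = LineK.mk k (τ i) 0 := h2
    have h4 := Quotient.exact h3
    rcases h4 with ⟨_, h5 | h5⟩
    · exact absurd rfl h5
    · exact congrArg Fin.val h5
  · intro σ i x
    rfl
end
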